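/- Let q ≥ 5 be a prime power. For every monic irreducible quadratic polynomial Q(x) ∈ F_q[x] and every pair (d,e) ∈ F_q²∖{(0,0)}, there exist a monic irreducible cubic polynomial p(x) ∈ F_q[x], a triple (a,b,c) ∈ F_q³∖{(0,0,0)}, and a polynomial f ∈ F_q[x] of degree at most q−5 such that (a+bx+cx²)/p(x) = (d+ex)/Q(x) + f(x) for all x ∈ F_q. -/

import Mathlib

open Polynomial

/-- For `q ≥ 5`, every rational function `(d+ex)/Q(x)` with `Q` a monic irreducible
quadratic and `(d,e) ≠ (0,0)` agrees on `F_q` with `(a+bx+cx²)/p(x) + f(x)` for some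
monic irreducible cubic `p`, some nonzero triple `(a,b,c)`, and some `f` of degree
at most `q - 5`. -/
theorem stmt18 {F : Type*} [Field F] [Fintype F] [DecidableEq F]
    (hq : 5 ≤ Fintype.card F)
    (Q : F[X]) (hQ : Q.Monic ∧ Irreducible Q ∧ Q.natDegree = 2)
    (d e : F) (hde : (d, e) ≠ (0, 0)) :
    ∃ p : F[X], p.Monic ∧ Irreducible p ∧ p.natDegree = 3 ∧
      ∃ a b c : F, (a, b, c) ≠ (0, 0, 0) ∧
        ∃ f : F[X], f.degree ≤ ((Fintype.card F - 5 : ℕ) : WithBot ℕ) ∧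
          ∀ x : F, (a + b * x + c * x ^ 2) / p.eval x
            = (d + e * x) / Q.eval x + f.eval x := by
  classical
  obtain ⟨hQm, hQirr, hQdeg⟩ := hQ
  set q : ℕ := Fintype.card F with hqdef
  -- the polynomial w = X^q - X
  set w : F[X] := X ^ q - X with hw
  have hwne : w ≠ 0 := FiniteField.X_pow_card_sub_X_ne_zero F (by omega)
  have hwdeg : w.natDegree = q := FiniteField.X_pow_card_sub_X_natDegree_eq F (by omega)
  have hweval : ∀ x : F, w.eval x = 0 := by
    intro x
    have hx : x ^ q = x := by rw [hqdef]; exact FiniteField.pow_card x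
    simp [hw, hx]
  -- a polynomial with no roots and positive degree does not divide w
  have key_ndvd : ∀ h : F[X], (∀ x : F, h.eval x ≠ 0) → 1 ≤ h.natDegree → ¬ h ∣ w := by
    rintro h hroots hdeg ⟨k, hk⟩
    have hh0 : h ≠ 0 := fun h0 => hroots 0 (by simp [h0])
    have hk0 : k ≠ 0 := fun k0 => hwne (by rw [hk, k0, mul_zero])
    have hcard : Multiset.card (w.roots) = q := by
      rw [hw, FiniteField.roots_X_pow_card_sub_X]
      simp [hqdef, Finset.card_univ]
    have hrh : h.roots = 0 := by
      rw [Multiset.eq_zero_iff_forall_notMem]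
      intro x hx
      exact hroots x ((mem_roots hh0).mp hx)
    have hwk : w.roots = k.roots := by
      rw [hk, roots_mul (hk ▸ hwne), hrh, zero_add]
    have h1 : Multiset.card k.roots ≤ k.natDegree := card_roots' k
    have h2 : w.natDegree = h.natDegree + k.natDegree := by
      rw [hk, natDegree_mul hh0 hk0]
    rw [hwk] at hcard
    omega
  -- Q has no roots
  have hQroots : Q.roots = 0 :=
    (irreducible_iff_roots_eq_zero_of_degree_le_three (by omega) (by omega)).mp hQirr
  have hQne : ∀ x : F, Q.eval x ≠ 0 := by
    intro x hx
    have hx' : x ∈ Q.roots := (mem_roots hQm.ne_zero).mpr hx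
    rw [hQroots] at hx'
    simp at hx'
  -- the polynomial s = d + e X
  set s : F[X] := C d + C e * X with hs
  have hseval : ∀ x : F, s.eval x = d + e * x := by intro x; simp [hs]
  have hs0 : s ≠ 0 := by
    intro h0
    apply hde
    have hd : d = 0 := by
      have := congrArg (fun P => Polynomial.coeff P 0) h0
      simpa [hs] using this
    have he : e = 0 := by
      have := congrArg (fun P => Polynomial.coeff P 1) h0
      simpa [hs] using this
    simp [hd, he]
  have hsdeg : s.natDegree ≤ 1 := by
    refine le_trans (natDegree_add_le _ _) ?_
    simp only [natDegree_C, max_le_iff]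
    exact ⟨Nat.zero_le 1, le_trans natDegree_mul_le (by simp)⟩
  -- Q is coprime to s
  have hcopQs : IsCoprime Q s := by
    rw [hQirr.coprime_iff_not_dvd]
    intro hdvd
    have := natDegree_le_of_dvd hdvd hs0
    omega
  obtain ⟨u, s', hus⟩ := hcopQs
  -- r = (w * s') mod Q, so that s * r ≡ w  [mod Q]
  set r : F[X] := (w * s') %ₘ Q with hr
  set D1 : F[X] := (w * s') /ₘ Q with hD1
  have hA1 : r + Q * D1 = w * s' := modByMonic_add_div (w * s') Q
  have hrdeg : r.natDegree ≤ 1 := by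
    by_cases h0 : r = 0
    · simp [h0]
    · have := natDegree_lt_natDegree h0 (degree_modByMonic_lt (w * s') hQm)
      omega
  have hQ1 : s * r - w = Q * (-(w * u) - s * D1) := by
    linear_combination s * hA1 + w * hus
  have hr0 : r ≠ 0 := by
    intro h0
    have hQw : Q ∣ w := by
      have : w = Q * (w * u + s * D1) := by
        have := hQ1
        rw [h0] at this
        linear_combination -this
      exact ⟨_, this⟩
    exact key_ndvd Q hQne (by omega) hQw
  -- r/Q is non-constant on F
  have hexist : ∃ β γ : F, r.eval β * Q.eval γ ≠ r.eval γ * Q.eval β := by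
    by_contra hcon
    push_neg at hcon
    obtain ⟨γ0⟩ : Nonempty F := inferInstance
    set P : F[X] := C (Q.eval γ0) * r - C (r.eval γ0) * Q with hP
    have hPdeg : P.natDegree ≤ 2 := by
      refine le_trans (natDegree_sub_le _ _) ?_
      simp only [max_le_iff]
      constructor
      · exact le_trans natDegree_mul_le (by simp; omega)
      · exact le_trans natDegree_mul_le (by simp; omega)
    have hPz : P = 0 := by
      apply eq_zero_of_natDegree_lt_card_of_eval_eq_zero P (f := (id : F → F))
        Function.injective_id
      · intro x
        simp only [hP, eval_sub, eval_mul, eval_C, id]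
        have := hcon x γ0
        linear_combination this
      · omega
    have hPz' : C (Q.eval γ0) * r = C (r.eval γ0) * Q := by
      have := sub_eq_zero.mp (hP ▸ hPz)
      exact this
    by_cases hrg : r.eval γ0 = 0
    · apply hr0
      rw [hrg] at hPz'
      simp only [map_zero, zero_mul] at hPz'
      have := hQne γ0
      rcases mul_eq_zero.mp hPz' with h | h
      · exact absurd (by simpa using h) this
      · exact h
    · have h1 : (C (Q.eval γ0) * r).natDegree ≤ 1 := by
        refine le_trans natDegree_mul_le ?_
        simp [hrdeg]
      have h2 : (C (r.eval γ0) * Q).natDegree = 2 := by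
        rw [natDegree_C_mul hrg, hQdeg]
      rw [hPz', h2] at h1
      omega
  obtain ⟨β, γ, hβγ⟩ := hexist
  have hβγne : β ≠ γ := by rintro rfl; exact hβγ rfl
  set hβ : F := r.eval β / Q.eval β with hhβ
  set hγ : F := r.eval γ / Q.eval γ with hhγ
  have hhne : hβ ≠ hγ := by
    intro h
    apply hβγ
    rw [hhβ, hhγ, div_eq_div_iff (hQne β) (hQne γ)] at h
    exact h
  set l : F := (β - γ) / (hγ - hβ) with hl
  have hl0 : l ≠ 0 :=
    div_ne_zero (sub_ne_zero.mpr hβγne) (sub_ne_zero.mpr (Ne.symm hhne))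
  set m : F → F := fun x => -x - l * (r.eval x / Q.eval x) with hm
  have hmβγ : m β = m γ := by
    have hmul : l * (hγ - hβ) = β - γ :=
      div_mul_cancel₀ _ (sub_ne_zero.mpr (Ne.symm hhne))
    show -β - l * (eval β r / eval β Q) = -γ - l * (eval γ r / eval γ Q)
    rw [← hhβ, ← hhγ]
    linear_combination hmul
  have hnotinj : ¬ Function.Injective m := fun hinj => hβγne (hinj hmβγ)
  have hnotsurj : ¬ Function.Surjective m := fun hs =>
    hnotinj (Finite.injective_iff_surjective.mpr hs)
  rw [Function.Surjective] at hnotsurj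
  push_neg at hnotsurj
  obtain ⟨t, ht⟩ := hnotsurj
  -- the cubic p
  set p : F[X] := Q * (X + C t) + C l * r with hp
  have hQX_monic : (Q * (X + C t)).Monic := hQm.mul (monic_X_add_C t)
  have hQXdeg : (Q * (X + C t)).natDegree = 3 := by
    rw [natDegree_mul hQm.ne_zero (X_add_C_ne_zero t), hQdeg, natDegree_X_add_C]
  have hdegClr : (C l * r).degree < (Q * (X + C t)).degree := by
    have h1 : (C l * r).degree ≤ 1 := by
      refine le_trans (degree_mul_le _ _) ?_
      calc (C l).degree + r.degree ≤ 0 + 1 := by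
            exact add_le_add degree_C_le (le_trans degree_le_natDegree (by exact_mod_cast hrdeg))
        _ = 1 := by norm_num
    have h2 : (Q * (X + C t)).degree = 3 := by
      rw [degree_eq_natDegree hQX_monic.ne_zero, hQXdeg]
      norm_num
    rw [h2]
    refine lt_of_le_of_lt h1 ?_
    exact_mod_cast (by norm_num : (1:ℕ) < 3)
  have hpm : p.Monic := hQX_monic.add_of_left hdegClr
  have hpdeg : p.natDegree = 3 := by
    have := natDegree_eq_of_degree_eq (degree_add_eq_left_of_degree_lt hdegClr)
    rw [hp, this, hQXdeg]
  have hpeval : ∀ x : F, p.eval x = Q.eval x * (x + t) + l * r.eval x := by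
    intro x; simp [hp]
  have hpne : ∀ x : F, p.eval x ≠ 0 := by
    intro x hx
    apply ht x
    rw [hpeval x] at hx
    have hQx := hQne x
    simp only [hm]
    field_simp
    linear_combination -hx
  have hproots : p.roots = 0 := by
    rw [Multiset.eq_zero_iff_forall_notMem]
    intro x hx
    exact hpne x ((mem_roots hpm.ne_zero).mp hx)
  have hpirr : Irreducible p :=
    (irreducible_iff_roots_eq_zero_of_degree_le_three (by omega) (by omega)).mpr hproots
  -- p is coprime to Q
  have hcoppQ : IsCoprime p Q := by
    rw [hpirr.coprime_iff_not_dvd]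
    intro hdvd
    have := natDegree_le_of_dvd hdvd hQm.ne_zero
    omega
  obtain ⟨u2, v2, h2⟩ := hcoppQ
  have hcoppQ : IsCoprime p Q := ⟨u2, v2, h2⟩
  -- N = (-(l * w * v2)) mod p
  set N : F[X] := (-(C l * w * v2)) %ₘ p with hN
  set D2 : F[X] := (-(C l * w * v2)) /ₘ p with hD2
  have hA2 : N + p * D2 = -(C l * w * v2) := modByMonic_add_div _ p
  have hNdeg : N.natDegree ≤ 2 := by
    by_cases h0 : N = 0
    · simp [h0]
    · have := natDegree_lt_natDegree h0 (degree_modByMonic_lt _ hpm)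
      omega
  have hpdvd2 : N * Q + C l * w = p * (C l * w * u2 - D2 * Q) := by
    linear_combination Q * hA2 - C l * w * h2
  have hN0 : N ≠ 0 := by
    intro h0
    have hplw : p ∣ C l * w := by
      refine ⟨C l * w * u2 - D2 * Q, ?_⟩
      have := hpdvd2
      rw [h0, zero_mul, zero_add] at this
      exact this
    have hpprime : Prime p := hpirr.prime
    rcases hpprime.dvd_mul.mp hplw with h | h
    · have hCl0 : (C l : F[X]) ≠ 0 := by simpa using hl0
      have := natDegree_le_of_dvd h hCl0
      simp [natDegree_C] at this
      omega
    · exact key_ndvd p hpne (by omega) h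
  -- Q divides C l * w - s * p
  have hQdvd2 : C l * w - s * p = Q * (-(C l * (-(w * u) - s * D1)) - s * (X + C t)) := by
    linear_combination (-(C l)) * hQ1 - s * hp
  -- G and f
  set G : F[X] := N * Q - s * p + C l * w with hG
  have hpG : p ∣ G := by
    refine ⟨C l * w * u2 - D2 * Q - s, ?_⟩
    rw [hG]
    linear_combination hpdvd2
  have hQG : Q ∣ G := by
    refine ⟨N + (-(C l * (-(w * u) - s * D1)) - s * (X + C t)), ?_⟩
    rw [hG]
    linear_combination hQdvd2
  have hpQG : p * Q ∣ G := hcoppQ.mul_dvd hpG hQG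
  have hpQm : (p * Q).Monic := hpm.mul hQm
  set f : F[X] := G /ₘ (p * Q) with hf
  have hGf : G = p * Q * f := by
    have hmod : G %ₘ (p * Q) = 0 := (modByMonic_eq_zero_iff_dvd hpQm).mpr hpQG
    have := modByMonic_add_div G (p * Q)
    rw [hmod, zero_add] at this
    exact this.symm
  have hGdeg : G.natDegree ≤ q := by
    rw [hG]
    refine le_trans (natDegree_add_le _ _) ?_
    simp only [max_le_iff]
    constructor
    · refine le_trans (natDegree_sub_le _ _) ?_
      simp only [max_le_iff]
      constructor
      · refine le_trans natDegree_mul_le ?_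
        omega
      · refine le_trans natDegree_mul_le ?_
        omega
    · refine le_trans natDegree_mul_le ?_
      simp [natDegree_C, hwdeg]
  have hfdeg : f.degree ≤ ((q - 5 : ℕ) : WithBot ℕ) := by
    by_cases hf0 : f = 0
    · rw [hf0, degree_zero]
      exact bot_le
    · have hG0 : G ≠ 0 := by
        rw [hGf]
        exact mul_ne_zero hpQm.ne_zero hf0
      have hdd : G.natDegree = (p * Q).natDegree + f.natDegree := by
        rw [hGf, natDegree_mul (mul_ne_zero hpm.ne_zero hQm.ne_zero) hf0]
      have hpQdeg : (p * Q).natDegree = 5 := by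
        rw [natDegree_mul hpm.ne_zero hQm.ne_zero, hpdeg, hQdeg]
      have hfq : f.natDegree ≤ q - 5 := by omega
      exact le_trans degree_le_natDegree (by exact_mod_cast hfq)
  -- the coefficients a b c
  refine ⟨p, hpm, hpirr, hpdeg, N.coeff 0, N.coeff 1, N.coeff 2, ?_, f, hfdeg, ?_⟩
  · intro habc
    apply hN0
    have h0 : N.coeff 0 = 0 := congrArg (fun z => z.1) habc
    have h1 : N.coeff 1 = 0 := congrArg (fun z => z.2.1) habc
    have h2' : N.coeff 2 = 0 := congrArg (fun z => z.2.2) habc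
    ext n
    rcases Nat.lt_or_ge n 3 with hn | hn
    · interval_cases n
      · simpa using h0
      · simpa using h1
      · simpa using h2'
    · exact coeff_eq_zero_of_natDegree_lt (by omega)
  · intro x
    have hNev : N.eval x = N.coeff 0 + N.coeff 1 * x + N.coeff 2 * x ^ 2 := by
      rw [eval_eq_sum_range' (lt_of_le_of_lt hNdeg (by norm_num : (2:ℕ) < 3))]
      simp [Finset.sum_range_succ]
    have e1 : G.eval x = N.eval x * Q.eval x - s.eval x * p.eval x := by
      rw [hG]
      simp only [eval_add, eval_sub, eval_mul, eval_C]
      rw [hweval x]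
      ring
    have e2 : G.eval x = p.eval x * Q.eval x * f.eval x := by
      rw [hGf]
      simp [eval_mul]
    rw [← hNev, ← hseval x]
    rw [div_add' _ _ _ (hQne x), div_eq_div_iff (hpne x) (hQne x)]
    have := e1.symm.trans e2
    linear_combination this
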